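/- Let p̂ ∈ Δ(V) with p̂_i > 0 for all i and Σ_i p̂_i = 1, and let 0 < ε < min_i p̂_i. Then the set of extreme points (vertices) of the convex polytope N(p̂) = {p ∈ Δ(V) : (1/2)Σ_i |p_i − p̂_i| ≤ ε} is exactly {p̂ − ε e_i + ε e_j : i ≠ j}, where e_i denotes the i-th standard basis vector of ℝ^d. -/

import Mathlib

open Finset

def simplex (d : ℕ) : Set (Fin d → ℝ) := {p | (∀ i, 0 ≤ p i) ∧ ∑ i, p i = 1}

noncomputable def dTV {d : ℕ} (p q : Fin d → ℝ) : ℝ := (∑ i, |p i - q i|) / 2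

def nbhd {d : ℕ} (phat : Fin d → ℝ) (ε : ℝ) : Set (Fin d → ℝ) :=
  {p | p ∈ simplex d ∧ dTV p phat ≤ ε}

private lemma sum_max_eq {d : ℕ} (p q : Fin d → ℝ) (h : ∑ i, p i = ∑ i, q i) :
    ∑ i, max (p i - q i) 0 = (∑ i, |p i - q i|) / 2 := by
  have h1 : ∀ i : Fin d, max (p i - q i) 0 = ((p i - q i) + |p i - q i|) / 2 := by
    intro i
    rcases le_or_gt 0 (p i - q i) with hx | hx
    · rw [max_eq_left hx, abs_of_nonneg hx]; ring
    · rw [max_eq_right hx.le, abs_of_neg hx]; ring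
  rw [Finset.sum_congr rfl fun i _ => h1 i, ← Finset.sum_div, Finset.sum_add_distrib,
    Finset.sum_sub_distrib, h]
  ring

private lemma dTV_comm' {d : ℕ} (p q : Fin d → ℝ) :
    (∑ i, |q i - p i|) / 2 = dTV p q := by
  unfold dTV; congr 1; exact Finset.sum_congr rfl fun i _ => abs_sub_comm _ _

private lemma coord_bounds {d : ℕ} (p phat : Fin d → ℝ) (ε : ℝ)
    (hs : ∑ i, p i = 1) (hps : ∑ i, phat i = 1) (h : dTV p phat ≤ ε) (k : Fin d) :
    phat k - ε ≤ p k ∧ p k ≤ phat k + ε := by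
  constructor
  · have he := sum_max_eq phat p (by rw [hps, hs])
    have hk : max (phat k - p k) 0 ≤ ∑ i, max (phat i - p i) 0 :=
      Finset.single_le_sum (f := fun i => max (phat i - p i) 0)
        (fun i _ => le_max_right _ _) (Finset.mem_univ k)
    have : phat k - p k ≤ ε :=
      le_trans (le_trans (le_max_left _ _) hk) (by rw [he, dTV_comm']; exact h)
    linarith
  · have he := sum_max_eq p phat (by rw [hps, hs])
    have hk : max (p k - phat k) 0 ≤ ∑ i, max (p i - phat i) 0 :=
      Finset.single_le_sum (f := fun i => max (p i - phat i) 0)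
        (fun i _ => le_max_right _ _) (Finset.mem_univ k)
    have : p k - phat k ≤ ε := le_trans (le_trans (le_max_left _ _) hk) (by rw [he]; exact h)
    linarith

private lemma mem_nbhd_of {d : ℕ} (phat : Fin d → ℝ) (ε : ℝ)
    (hps : ∑ i, phat i = 1) (hεmin : ∀ i, ε < phat i)
    (p : Fin d → ℝ) (hs : ∑ i, p i = 1) (h : dTV p phat ≤ ε) : p ∈ nbhd phat ε := by
  refine ⟨⟨fun k => ?_, hs⟩, h⟩
  have h1 := (coord_bounds p phat ε hs hps h k).1
  have h2 := hεmin k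
  linarith

private def pert {d : ℕ} (q : Fin d → ℝ) (a b : Fin d) (δ : ℝ) : Fin d → ℝ :=
  fun k => q k + (if k = a then δ else 0) - (if k = b then δ else 0)

private lemma pert_sum {d : ℕ} (q : Fin d → ℝ) (a b : Fin d) (δ : ℝ) :
    ∑ k, pert q a b δ k = ∑ k, q k := by
  unfold pert
  rw [Finset.sum_sub_distrib, Finset.sum_add_distrib]
  simp

private lemma pert_abs_sum {d : ℕ} (q phat : Fin d → ℝ) (a b : Fin d) (hab : a ≠ b) (δ : ℝ) :
    ∑ k, |pert q a b δ k - phat k|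
      = ∑ k, |q k - phat k| + (|q a + δ - phat a| - |q a - phat a|)
          + (|q b - δ - phat b| - |q b - phat b|) := by
  have key : ∑ k, (|pert q a b δ k - phat k| - |q k - phat k|)
      = (|q a + δ - phat a| - |q a - phat a|) + (|q b - δ - phat b| - |q b - phat b|) := by
    rw [← Finset.sum_subset (Finset.subset_univ {a, b})
        (by intro c _ hc
            simp only [Finset.mem_insert, Finset.mem_singleton, not_or] at hc
            unfold pert
            simp [hc.1, hc.2]),
      Finset.sum_pair hab]
    unfold pert
    simp [hab, hab.symm]
  rw [Finset.sum_sub_distrib] at key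
  linarith [key]

private lemma pert_mem {d : ℕ} (q phat : Fin d → ℝ) (ε : ℝ)
    (hps : ∑ i, phat i = 1) (hεmin : ∀ i, ε < phat i)
    (a b : Fin d) (hab : a ≠ b) (δ : ℝ) (hqs : ∑ i, q i = 1)
    (hbound : (|q a + δ - phat a| - |q a - phat a|)
        + (|q b - δ - phat b| - |q b - phat b|) + ∑ k, |q k - phat k| ≤ 2 * ε) :
    pert q a b δ ∈ nbhd phat ε := by
  apply mem_nbhd_of phat ε hps hεmin _ (by rw [pert_sum, hqs])
  unfold dTV
  rw [pert_abs_sum q phat a b hab δ]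
  linarith

private lemma mid_mem {d : ℕ} (q : Fin d → ℝ) (a b : Fin d) (δ : ℝ) :
    q ∈ openSegment ℝ (pert q a b δ) (pert q b a δ) := by
  refine ⟨1/2, 1/2, by norm_num, by norm_num, by norm_num, ?_⟩
  funext k
  simp only [Pi.add_apply, Pi.smul_apply, smul_eq_mul]
  unfold pert
  by_cases hka : k = a <;> by_cases hkb : k = b <;> simp [hka, hkb] <;> ring

private lemma comb_eq_min (s t x y m : ℝ) (hs : 0 < s) (ht : 0 < t) (hst : s + t = 1)
    (hx : m ≤ x) (hy : m ≤ y) (h : s * x + t * y = m) : x = m ∧ y = m := by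
  have h1 : s * (x - m) + t * (y - m) = 0 := by linear_combination h - m * hst
  have h2 : 0 ≤ s * (x - m) := mul_nonneg hs.le (by linarith)
  have h3 : 0 ≤ t * (y - m) := mul_nonneg ht.le (by linarith)
  have h4 : s * (x - m) = 0 := by linarith
  have h5 : t * (y - m) = 0 := by linarith
  constructor
  · have := (mul_eq_zero.1 h4).resolve_left (ne_of_gt hs); linarith
  · have := (mul_eq_zero.1 h5).resolve_left (ne_of_gt ht); linarith

private lemma comb_eq_max (s t x y m : ℝ) (hs : 0 < s) (ht : 0 < t) (hst : s + t = 1)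
    (hx : x ≤ m) (hy : y ≤ m) (h : s * x + t * y = m) : x = m ∧ y = m := by
  have h1 : s * (m - x) + t * (m - y) = 0 := by linear_combination m * hst - h
  have h2 : 0 ≤ s * (m - x) := mul_nonneg hs.le (by linarith)
  have h3 : 0 ≤ t * (m - y) := mul_nonneg ht.le (by linarith)
  have h4 : s * (m - x) = 0 := by linarith
  have h5 : t * (m - y) = 0 := by linarith
  constructor
  · have := (mul_eq_zero.1 h4).resolve_left (ne_of_gt hs); linarith
  · have := (mul_eq_zero.1 h5).resolve_left (ne_of_gt ht); linarith

/-- for `0 < ε < min_i p̂_i`, the extreme points of the TV-ball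
polytope `N(p̂)` are exactly the vectors `p̂ − ε e_i + ε e_j`, `i ≠ j`. -/
theorem stmt8 {d : ℕ} (hd : 2 ≤ d) (phat : Fin d → ℝ)
    (hmem : phat ∈ simplex d)
    (hpos : ∀ i, 0 < phat i)
    (ε : ℝ) (hε : 0 < ε) (hεmin : ∀ i, ε < phat i) :
    Set.extremePoints ℝ (nbhd phat ε)
      = {p : Fin d → ℝ | ∃ i j : Fin d, i ≠ j ∧
          p = fun k => phat k - (if k = i then ε else 0) + (if k = j then ε else 0)} := by
  have hps : ∑ i, phat i = 1 := hmem.2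
  ext q
  simp only [Set.mem_setOf_eq]
  constructor
  · -- extreme point → vertex form
    rintro ⟨hqN, hext⟩
    have hqs : ∑ i, q i = 1 := hqN.1.2
    have hdtv : dTV q phat ≤ ε := hqN.2
    -- general non-extremeness tool
    have tool : ∀ a b : Fin d, a ≠ b → ∀ δ : ℝ, 0 < δ →
        pert q a b δ ∈ nbhd phat ε → pert q b a δ ∈ nbhd phat ε → False := by
      intro a b hab δ hδ h1 h2
      have h3 := hext h1 h2 (mid_mem q a b δ)
      have h4 := congrFun h3 a
      unfold pert at h4
      simp [hab] at h4
      linarith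
    rcases lt_or_eq_of_le hdtv with hlt | heq
    · -- dTV < ε : not extreme, contradiction
      exfalso
      set δ := ε - dTV q phat with hδdef
      have hδ : 0 < δ := by simp [hδdef]; linarith
      have a : Fin d := ⟨0, by omega⟩
      have habs : ∀ a b : Fin d,
          (|q a + δ - phat a| - |q a - phat a|)
            + (|q b - δ - phat b| - |q b - phat b|) + ∑ k, |q k - phat k| ≤ 2 * ε := by
        intro a b
        have h1 : |q a + δ - phat a| ≤ |q a - phat a| + δ := by
          calc |q a + δ - phat a| = |(q a - phat a) + δ| := by ring_nf
            _ ≤ |q a - phat a| + |δ| := abs_add_le _ _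
            _ = |q a - phat a| + δ := by rw [abs_of_pos hδ]
        have h2 : |q b - δ - phat b| ≤ |q b - phat b| + δ := by
          calc |q b - δ - phat b| = |(q b - phat b) + (-δ)| := by ring_nf
            _ ≤ |q b - phat b| + |(-δ)| := abs_add_le _ _
            _ = |q b - phat b| + δ := by rw [abs_neg, abs_of_pos hδ]
        have h3 : ∑ k, |q k - phat k| = 2 * dTV q phat := by unfold dTV; ring
        rw [h3]
        have : dTV q phat + δ = ε := by simp [hδdef]
        linarith
      have hab : (⟨0, by omega⟩ : Fin d) ≠ ⟨1, by omega⟩ := by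
        simp [Fin.ext_iff]
      exact tool _ _ hab δ hδ
        (pert_mem q phat ε hps hεmin _ _ hab δ hqs (habs _ _))
        (pert_mem q phat ε hps hεmin _ _ hab.symm δ hqs (habs _ _))
    · -- dTV = ε
      have h2ε : ∑ k, |q k - phat k| = 2 * ε := by
        have h := heq
        unfold dTV at h; linarith
      have hmaxp : ∑ i, max (q i - phat i) 0 = ε := by
        rw [sum_max_eq q phat (by rw [hqs, hps]), h2ε]; ring
      have hmaxn : ∑ i, max (phat i - q i) 0 = ε := by
        rw [sum_max_eq phat q (by rw [hqs, hps]), dTV_comm']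
        exact heq
      -- existence of a positive and a negative coordinate
      have hposex : ∃ a, phat a < q a := by
        by_contra hcon
        push_neg at hcon
        have : ∑ i, max (q i - phat i) 0 = 0 :=
          Finset.sum_eq_zero fun i _ => max_eq_right (by linarith [hcon i])
        rw [this] at hmaxp; linarith
      have hnegex : ∃ b, q b < phat b := by
        by_contra hcon
        push_neg at hcon
        have : ∑ i, max (phat i - q i) 0 = 0 :=
          Finset.sum_eq_zero fun i _ => max_eq_right (by linarith [hcon i])
        rw [this] at hmaxn; linarith
      obtain ⟨a, ha⟩ := hposex
      obtain ⟨b, hb⟩ := hnegex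
      -- uniqueness of positive coordinate
      have hposu : ∀ c, phat c < q c → c = a := by
        intro c hc
        by_contra hca
        set δ := min (q a - phat a) (q c - phat c) with hδdef
        have hδ : 0 < δ := lt_min (by linarith) (by linarith)
        have hδa : δ ≤ q a - phat a := min_le_left _ _
        have hδc : δ ≤ q c - phat c := min_le_right _ _
        have hac : a ≠ c := fun h => hca h.symm
        have key : ∀ u v : Fin d, phat u < q u → δ ≤ q u - phat u →
            phat v < q v → δ ≤ q v - phat v →
            (|q u + δ - phat u| - |q u - phat u|)
              + (|q v - δ - phat v| - |q v - phat v|) + ∑ k, |q k - phat k| ≤ 2 * ε := by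
          intro u v hu hδu hv hδv
          have e1 : |q u + δ - phat u| = (q u - phat u) + δ := by
            rw [abs_of_pos (by linarith)]; ring
          have e2 : |q u - phat u| = q u - phat u := abs_of_pos (by linarith)
          have e3 : |q v - δ - phat v| = (q v - phat v) - δ := by
            rw [abs_of_nonneg (by linarith)]; ring
          have e4 : |q v - phat v| = q v - phat v := abs_of_pos (by linarith)
          rw [e1, e2, e3, e4, h2ε]; linarith
        exact tool a c hac δ hδ
          (pert_mem q phat ε hps hεmin _ _ hac δ hqs (key a c ha hδa hc hδc))
          (pert_mem q phat ε hps hεmin _ _ hac.symm δ hqs (key c a hc hδc ha hδa))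
      -- uniqueness of negative coordinate
      have hnegu : ∀ c, q c < phat c → c = b := by
        intro c hc
        by_contra hcb
        set δ := min (phat b - q b) (phat c - q c) with hδdef
        have hδ : 0 < δ := lt_min (by linarith) (by linarith)
        have hδb : δ ≤ phat b - q b := min_le_left _ _
        have hδc : δ ≤ phat c - q c := min_le_right _ _
        have hbc : b ≠ c := fun h => hcb h.symm
        have key : ∀ u v : Fin d, q u < phat u → δ ≤ phat u - q u →
            q v < phat v → δ ≤ phat v - q v →
            (|q u + δ - phat u| - |q u - phat u|)
              + (|q v - δ - phat v| - |q v - phat v|) + ∑ k, |q k - phat k| ≤ 2 * ε := by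
          intro u v hu hδu hv hδv
          have e1 : |q u + δ - phat u| = (phat u - q u) - δ := by
            rw [abs_of_nonpos (by linarith)]; ring
          have e2 : |q u - phat u| = phat u - q u := by
            rw [abs_of_neg (by linarith)]; ring
          have e3 : |q v - δ - phat v| = (phat v - q v) + δ := by
            rw [abs_of_neg (by linarith)]; ring
          have e4 : |q v - phat v| = phat v - q v := by
            rw [abs_of_neg (by linarith)]; ring
          rw [e1, e2, e3, e4, h2ε]; linarith
        exact tool b c hbc δ hδ
          (pert_mem q phat ε hps hεmin _ _ hbc δ hqs (key b c hb hδb hc hδc))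
          (pert_mem q phat ε hps hεmin _ _ hbc.symm δ hqs (key c b hc hδc hb hδb))
      have hab : a ≠ b := fun h => by rw [h] at ha; linarith
      -- values at a and b
      have hqa : q a = phat a + ε := by
        have : ∑ i, max (q i - phat i) 0 = max (q a - phat a) 0 := by
          apply Finset.sum_eq_single
          · intro c _ hca
            have : ¬ phat c < q c := fun h => hca (hposu c h)
            exact max_eq_right (by linarith)
          · intro h; exact absurd (Finset.mem_univ a) h
        rw [this, max_eq_left (by linarith)] at hmaxp
        linarith
      have hqb : q b = phat b - ε := by
        have : ∑ i, max (phat i - q i) 0 = max (phat b - q b) 0 := by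
          apply Finset.sum_eq_single
          · intro c _ hcb
            have : ¬ q c < phat c := fun h => hcb (hnegu c h)
            exact max_eq_right (by linarith)
          · intro h; exact absurd (Finset.mem_univ b) h
        rw [this, max_eq_left (by linarith)] at hmaxn
        linarith
      refine ⟨b, a, hab.symm, funext fun k => ?_⟩
      by_cases hka : k = a
      · subst hka; rw [if_neg hab, if_pos rfl, hqa]; ring
      · by_cases hkb : k = b
        · subst hkb; rw [if_pos rfl, if_neg hka, hqb]; ring
        · have h1 : ¬ phat k < q k := fun h => hka (hposu k h)
          have h2 : ¬ q k < phat k := fun h => hkb (hnegu k h)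
          have h3 : q k = phat k := le_antisymm (not_lt.1 h1) (not_lt.1 h2)
          rw [if_neg hkb, if_neg hka, h3]; ring
  · -- vertex form → extreme point
    rintro ⟨i, j, hij, rfl⟩
    set v : Fin d → ℝ := fun k => phat k - (if k = i then ε else 0) + (if k = j then ε else 0)
      with hvdef
    have hvi : v i = phat i - ε := by simp [hvdef, hij, Ne.symm hij]
    have hvj : v j = phat j + ε := by simp [hvdef, hij, Ne.symm hij]
    have hvabs : ∀ k, |v k - phat k| = (if k = i then ε else 0) + (if k = j then ε else 0) := by
      intro k
      by_cases hki : k = i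
      · subst hki
        rw [hvi, if_pos rfl, if_neg (by intro h; exact hij (h ▸ rfl))]
        rw [abs_of_nonpos (by linarith)]; ring
      · by_cases hkj : k = j
        · subst hkj
          rw [hvj, if_neg hki, if_pos rfl, abs_of_nonneg (by linarith)]; ring
        · simp [hvdef, hki, hkj]
    have hvsum : ∑ k, v k = 1 := by
      simp only [hvdef]
      rw [Finset.sum_add_distrib, Finset.sum_sub_distrib]
      simp [hps]
    have hvdtv : dTV v phat = ε := by
      unfold dTV
      rw [Finset.sum_congr rfl fun k _ => hvabs k, Finset.sum_add_distrib]
      simp [hij]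
    have hvmem : v ∈ nbhd phat ε := mem_nbhd_of phat ε hps hεmin v hvsum (le_of_eq hvdtv)
    refine ⟨hvmem, ?_⟩
    intro x hx y hy hseg
    obtain ⟨s, t, hs, ht, hst, heq⟩ := hseg
    have hxb := coord_bounds x phat ε hx.1.2 hps hx.2
    have hyb := coord_bounds y phat ε hy.1.2 hps hy.2
    have heqi := congrFun heq i
    have heqj := congrFun heq j
    simp only [Pi.add_apply, Pi.smul_apply, smul_eq_mul] at heqi heqj
    rw [hvi] at heqi
    rw [hvj] at heqj
    have hxi := comb_eq_min s t (x i) (y i) (phat i - ε) hs ht hst (hxb i).1 (hyb i).1 heqi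
    have hxj := comb_eq_max s t (x j) (y j) (phat j + ε) hs ht hst (hxb j).2 (hyb j).2 heqj
    -- any point of nbhd attaining both bounds equals v
    have main : ∀ z : Fin d → ℝ, z ∈ nbhd phat ε → z i = phat i - ε → z j = phat j + ε →
        z = v := by
      intro z hz hzi hzj
      have hzs : ∑ k, z k = 1 := hz.1.2
      have hzd : ∑ k, |z k - phat k| ≤ 2 * ε := by
        have := hz.2; unfold dTV at this; linarith
      have hzero : ∀ k, k ≠ i → k ≠ j → z k = phat k := by
        intro k hki hkj
        have hsub : ({i, j, k} : Finset (Fin d)) ⊆ Finset.univ := Finset.subset_univ _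
        have hsum3 : ∑ m ∈ ({i, j, k} : Finset (Fin d)), |z m - phat m| ≤ ∑ m, |z m - phat m| :=
          Finset.sum_le_sum_of_subset_of_nonneg hsub (fun m _ _ => abs_nonneg _)
        have hij' : i ∉ ({j, k} : Finset (Fin d)) := by simp [hij, Ne.symm hki]
        have hjk : j ∉ ({k} : Finset (Fin d)) := by simp [Ne.symm hkj]
        rw [Finset.sum_insert hij', Finset.sum_insert hjk, Finset.sum_singleton] at hsum3
        have e1 : |z i - phat i| = ε := by rw [hzi]; rw [abs_of_nonpos (by linarith)]; ring
        have e2 : |z j - phat j| = ε := by rw [hzj]; rw [abs_of_nonneg (by linarith)]; ring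
        rw [e1, e2] at hsum3
        have : |z k - phat k| ≤ 0 := by linarith
        have := abs_nonneg (z k - phat k)
        have h0 : |z k - phat k| = 0 := le_antisymm ‹|z k - phat k| ≤ 0› this
        have := abs_eq_zero.1 h0
        linarith [sub_eq_zero.1 this, this]
      funext k
      by_cases hki : k = i
      · subst hki; rw [hzi, hvi]
      · by_cases hkj : k = j
        · subst hkj; rw [hzj, hvj]
        · rw [hzero k hki hkj]
          simp [hvdef, hki, hkj]
    exact main x hx hxi.1 hxj.1
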